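/- Let μ be a fuzzy set of an MTL-algebra L. Then for every t ∈ (0.5, 1] the q-level set F_q(t) = {x ∈ L : μ(x) + t > 1} is either empty or a Boolean filter of L if and only if μ is an (∈,∈∨q)-fuzzy Boolean filter of L. -/
import Mathlib


/-- An MTL-algebra: a bounded lattice with `⊥ ≠ ⊤`, a product `odot` and residuum `rimp`,
where `odot` is associative, commutative and monotone in each argument, `⊤` is a unit,
the Galois correspondence holds and prelinearity holds. -/
class MTL (L : Type*) extends Lattice L, BoundedOrder L where
  odot : L → L → L
  rimp : L → L → L
  bot_ne_top : (⊥ : L) ≠ ⊤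
  odot_assoc : ∀ x y z : L, odot (odot x y) z = odot x (odot y z)
  odot_comm : ∀ x y : L, odot x y = odot y x
  odot_mono_left : ∀ x y z : L, x ≤ y → odot x z ≤ odot y z
  odot_mono_right : ∀ x y z : L, x ≤ y → odot z x ≤ odot z y
  odot_top : ∀ x : L, odot x ⊤ = x
  galois : ∀ x y z : L, odot x y ≤ z ↔ x ≤ rimp y z
  prelinear : ∀ x y : L, rimp x y ⊔ rimp y x = ⊤

open MTL

variable {L : Type*} [MTL L]

/-- A subset `A` is a filter: `1 ∈ A` and it is closed under modus ponens. -/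
def IsFilter' (A : Set L) : Prop :=
  (⊤ : L) ∈ A ∧ ∀ x y : L, x ∈ A → rimp x y ∈ A → y ∈ A

/-- An (∈,∈∨q)-fuzzy filter: `μ(1) ≥ min(μ(x), 0.5)` and
`μ(y) ≥ min(μ(x → y), μ(x), 0.5)`. -/
def IsEIVQFuzzyFilter (μ : L → ℝ) : Prop :=
  (∀ x : L, μ ⊤ ≥ min (μ x) (1/2)) ∧
    ∀ x y : L, μ y ≥ min (min (μ (rimp x y)) (μ x)) (1/2)

/-- A Boolean filter: a filter containing `x ∨ x'` for all `x`, where `x' = x → 0`. -/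
def IsBooleanFilter (A : Set L) : Prop :=
  IsFilter' A ∧ ∀ x : L, x ⊔ rimp x ⊥ ∈ A

/-- An (∈,∈∨q)-fuzzy Boolean filter:
`μ(x → z) ≥ min(μ(x → (z' → y)), μ(y → z), 0.5)`. -/
def IsEIVQFuzzyBooleanFilter (μ : L → ℝ) : Prop :=
  IsEIVQFuzzyFilter μ ∧
    ∀ x y z : L, μ (rimp x z) ≥
      min (min (μ (rimp x (rimp (rimp z ⊥) y))) (μ (rimp y z))) (1/2)

private lemma rimp_eq_top' {a b : L} (h : a ≤ b) : rimp a b = ⊤ :=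
  le_antisymm le_top ((galois ⊤ a b).mp (by rw [odot_comm, odot_top]; exact h))

private lemma odot_rimp_le' (a b : L) : odot (rimp a b) a ≤ b := (galois _ _ _).mpr le_rfl

private lemma rimp_top_eq' (z : L) : rimp ⊤ z = z := by
  apply le_antisymm
  · have := (galois (rimp ⊤ z) ⊤ z).mpr le_rfl
    rwa [odot_top] at this
  · exact (galois z ⊤ z).mp (by rw [odot_top])

private lemma rimp_anti' {a b : L} (c : L) (h : a ≤ b) : rimp b c ≤ rimp a c :=
  (galois _ _ _).mp (le_trans (odot_mono_right _ _ _ h) (odot_rimp_le' b c))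

private lemma filter_up {A : Set L} (hA : IsFilter' A) {a b : L} (ha : a ∈ A) (h : a ≤ b) :
    b ∈ A :=
  hA.2 a b ha (by rw [rimp_eq_top' h]; exact hA.1)

private lemma filter_key {A : Set L} (hA : IsFilter' A) {a b c : L} (ha : a ∈ A) (hb : b ∈ A)
    (h : a ≤ rimp b c) : c ∈ A :=
  hA.2 b c hb (filter_up hA ha h)

private lemma boolean_mp {A : Set L} (hA : IsBooleanFilter A) (x y z : L)
    (hp : rimp x (rimp (rimp z ⊥) y) ∈ A) (hq : rimp y z ∈ A) : rimp x z ∈ A := by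
  set z' := rimp z ⊥ with hz'
  set p := rimp x (rimp z' y) with hpdef
  set q := rimp y z with hqdef
  have h1 : rimp x (rimp z' z) ∈ A := by
    apply filter_key hA.1 hp hq
    refine (galois _ _ _).mp ((galois _ _ _).mp ((galois _ _ _).mp ?_))
    have hrearr : odot (odot (odot p q) x) z' = odot (odot (odot p x) z') q := by
      rw [odot_assoc p q x, odot_comm q x, ← odot_assoc p x q, odot_assoc (odot p x) q z',
        odot_comm q z', ← odot_assoc]
    rw [hrearr]
    calc odot (odot (odot p x) z') q
        ≤ odot (odot (rimp z' y) z') q :=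
          odot_mono_left _ _ _ (odot_mono_left _ _ _ (odot_rimp_le' x (rimp z' y)))
      _ ≤ odot y q := odot_mono_left _ _ _ (odot_rimp_le' z' y)
      _ ≤ z := by rw [odot_comm]; exact odot_rimp_le' y z
  have hzz : z ⊔ z' ∈ A := hA.2 z
  have hu : rimp (rimp z' z) z ∈ A := by
    apply filter_up hA.1 hzz
    apply sup_le
    · exact (galois _ _ _).mp (le_trans (odot_mono_right _ _ _ le_top) (le_of_eq (odot_top z)))
    · exact (galois _ _ _).mp (by rw [odot_comm]; exact odot_rimp_le' z' z)
  apply filter_key hA.1 h1 hu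
  refine (galois _ _ _).mp ((galois _ _ _).mp ?_)
  set s := rimp z' z with hsdef
  set u := rimp s z with hudef
  have hre : odot (odot (rimp x s) u) x = odot (odot (rimp x s) x) u := by
    rw [odot_assoc, odot_comm u x, ← odot_assoc]
  rw [hre]
  calc odot (odot (rimp x s) x) u ≤ odot s u := odot_mono_left _ _ _ (odot_rimp_le' x s)
    _ ≤ z := by rw [odot_comm]; exact odot_rimp_le' s z

/-- From a fuzzy Boolean filter, `μ(x ⊔ x') ≥ min(μ(⊤), 1/2)`. -/
private lemma fuzzy_bool_sup {μ : L → ℝ} (h : IsEIVQFuzzyBooleanFilter μ) (x : L) :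
    μ (x ⊔ rimp x ⊥) ≥ min (μ ⊤) (1/2) := by
  set z := x ⊔ rimp x ⊥ with hzdef
  have hz' : rimp z ⊥ ≤ z :=
    le_trans (rimp_anti' ⊥ (le_sup_left : x ≤ z)) le_sup_right
  have h2 := h.2 ⊤ (rimp z ⊥) z
  rw [rimp_top_eq', rimp_eq_top' (le_refl (rimp z ⊥)), rimp_eq_top' hz', rimp_top_eq',
    min_self] at h2
  exact h2

theorem stmt_12 (μ : L → ℝ) (hμ0 : ∀ x : L, 0 ≤ μ x) (hμ1 : ∀ x : L, μ x ≤ 1) :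
    (∀ t : ℝ, 1/2 < t → t ≤ 1 → ({x : L | 1 < μ x + t} = ∅ ∨ IsBooleanFilter {x : L | 1 < μ x + t})) ↔ IsEIVQFuzzyBooleanFilter μ := by
  constructor
  · intro H
    -- helper: for c, m with m ≤ 1/2 and μ c < m, produce a level t where the q-level set
    -- contains every p with m ≤ μ p but not c
    have key : ∀ (c : L) (m : ℝ), m ≤ 1/2 → μ c < m →
        ∃ t : ℝ, ({x : L | 1 < μ x + t} = ∅ ∨ IsBooleanFilter {x : L | 1 < μ x + t}) ∧
          (∀ p : L, m ≤ μ p → p ∈ {x : L | 1 < μ x + t}) ∧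
          c ∉ {x : L | 1 < μ x + t} := by
      intro c m hm hlt
      refine ⟨1 - (μ c + m)/2, H _ (by nlinarith [hμ0 c]) (by nlinarith [hμ0 c]), ?_, ?_⟩
      · intro p hp
        simp only [Set.mem_setOf_eq]; nlinarith
      · simp only [Set.mem_setOf_eq]; push_neg; nlinarith
    refine ⟨⟨?_, ?_⟩, ?_⟩
    · -- μ ⊤ ≥ min (μ x) (1/2)
      intro x
      by_contra hcon
      push_neg at hcon
      obtain ⟨t, hOr, hmem, hnot⟩ := key ⊤ (min (μ x) (1/2)) (min_le_right _ _) hcon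
      have hx : x ∈ {a : L | 1 < μ a + t} := hmem x (min_le_left _ _)
      rcases hOr with he | hb
      · rw [he] at hx; exact hx
      · exact hnot hb.1.1
    · -- μ y ≥ min (min (μ (x→y)) (μ x)) (1/2)
      intro x y
      by_contra hcon
      push_neg at hcon
      obtain ⟨t, hOr, hmem, hnot⟩ := key y _ (min_le_right _ _) hcon
      have h1 : rimp x y ∈ {a : L | 1 < μ a + t} :=
        hmem _ (le_trans (min_le_left _ _) (min_le_left _ _))
      have h2 : x ∈ {a : L | 1 < μ a + t} :=
        hmem _ (le_trans (min_le_left _ _) (min_le_right _ _))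
      rcases hOr with he | hb
      · rw [he] at h1; exact h1
      · exact hnot (hb.1.2 x y h2 h1)
    · -- Boolean condition
      intro x y z
      by_contra hcon
      push_neg at hcon
      obtain ⟨t, hOr, hmem, hnot⟩ := key (rimp x z) _ (min_le_right _ _) hcon
      have h1 : rimp x (rimp (rimp z ⊥) y) ∈ {a : L | 1 < μ a + t} :=
        hmem _ (le_trans (min_le_left _ _) (min_le_left _ _))
      have h2 : rimp y z ∈ {a : L | 1 < μ a + t} :=
        hmem _ (le_trans (min_le_left _ _) (min_le_right _ _))
      rcases hOr with he | hb
      · rw [he] at h1; exact h1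
      · exact hnot (boolean_mp hb x y z h1 h2)
  · intro h t ht1 ht2
    rcases Set.eq_empty_or_nonempty ({x : L | 1 < μ x + t} : Set L) with he | ⟨a, ha⟩
    · exact Or.inl he
    · right
      have h1t : 1 - t < 1/2 := by linarith
      have ha' : 1 < μ a + t := ha
      have htop : (⊤ : L) ∈ {x : L | 1 < μ x + t} := by
        simp only [Set.mem_setOf_eq]
        have hmin : min (μ a) (1/2) ≤ μ ⊤ := h.1.1 a
        rcases min_cases (μ a) (1/2 : ℝ) with ⟨hh, _⟩ | ⟨hh, _⟩ <;> rw [hh] at hmin <;> linarith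
      refine ⟨⟨htop, ?_⟩, ?_⟩
      · intro x y hx hxy
        simp only [Set.mem_setOf_eq] at hx hxy ⊢
        have hmin := h.1.2 x y
        rcases le_or_gt (min (μ (rimp x y)) (μ x)) (1/2 : ℝ) with hc | hc
        · rw [min_eq_left hc] at hmin
          rcases min_cases (μ (rimp x y)) (μ x) with ⟨hh, _⟩ | ⟨hh, _⟩ <;> rw [hh] at hmin <;>
            linarith
        · rw [min_eq_right hc.le] at hmin; linarith
      · intro x
        simp only [Set.mem_setOf_eq]
        have hmin := fuzzy_bool_sup h x
        have hT : 1 < μ ⊤ + t := htop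
        rcases min_cases (μ ⊤) (1/2 : ℝ) with ⟨hh, _⟩ | ⟨hh, _⟩ <;> rw [hh] at hmin <;> linarith
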